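/- Let Φ : ℝ^d → ℝ and Ψ : ℝ^s → ℝ be even functions that are conditionally negative definite of order 1. Let x_1,…,x_n ∈ ℝ^d be pairwise distinct, y_1,…,y_n ∈ ℝ^s be pairwise distinct, and define A, B ∈ ℝ^{n×n} by A_{ij} = Φ(x_i − x_j) and B_{ij} = Ψ(y_i − y_j). Then for every nonzero matrix V ∈ ℝ^{n×n} with V𝟙 = 0 and Vᵀ𝟙 = 0 one has tr(B Vᵀ A V) > 0; that is, the Hessian −(B⊗A) of the energy E₂(X) = −tr(B Xᵀ A X) is negative definite on lin(DS). -/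

import Mathlib

open Matrix

/-- A function `Φ : ℝ^d → ℝ` is conditionally negative definite of order 1 if for every finite
collection of pairwise distinct points `x_1, …, x_n` and every nonzero vector `η` with
`∑ i, η i = 0`, one has `∑ i j, η i * η j * Φ (x i - x j) < 0`. -/
def CondNegDefOrder1 {d : ℕ} (Φ : (Fin d → ℝ) → ℝ) : Prop :=
  ∀ (n : ℕ) (x : Fin n → (Fin d → ℝ)), Function.Injective x →
    ∀ η : Fin n → ℝ, η ≠ 0 → (∑ i, η i) = 0 →
      ∑ i, ∑ j, η i * η j * Φ (x i - x j) < 0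

lemma quadForm_eq {n : ℕ} (A : Matrix (Fin n) (Fin n) ℝ) (η : Fin n → ℝ) :
    η ⬝ᵥ (A *ᵥ η) = ∑ i, ∑ j, η i * η j * A i j := by
  simp only [dotProduct, mulVec, Finset.mul_sum]
  exact Finset.sum_congr rfl fun i _ => Finset.sum_congr rfl fun j _ => by ring

/-- If `Φ, Ψ` are even, conditionally negative definite functions of order 1, and
`A i j = Φ (x i - x j)`, `B i j = Ψ (y i - y j)` for pairwise distinct points `x i` and
pairwise distinct points `y i`, then for every nonzero `V` with `V𝟙 = 0` and `Vᵀ𝟙 = 0` one has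
`tr (B Vᵀ A V) > 0`; i.e. the Hessian `-(B ⊗ A)` of `E₂(X) = -tr (B Xᵀ A X)` is negative
definite on `lin(DS)`. -/
theorem conditionally_concave_of_condNegDef
    {d s n : ℕ} (Φ : (Fin d → ℝ) → ℝ) (Ψ : (Fin s → ℝ) → ℝ)
    (hΦeven : ∀ v, Φ (-v) = Φ v) (hΨeven : ∀ v, Ψ (-v) = Ψ v)
    (hΦ : CondNegDefOrder1 Φ) (hΨ : CondNegDefOrder1 Ψ)
    (x : Fin n → (Fin d → ℝ)) (hx : Function.Injective x)
    (y : Fin n → (Fin s → ℝ)) (hy : Function.Injective y)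
    (A B : Matrix (Fin n) (Fin n) ℝ)
    (hA : ∀ i j, A i j = Φ (x i - x j)) (hB : ∀ i j, B i j = Ψ (y i - y j))
    (V : Matrix (Fin n) (Fin n) ℝ) (hV : V ≠ 0)
    (hV1 : V *ᵥ (fun _ => 1) = 0) (hV2 : Vᵀ *ᵥ (fun _ => 1) = 0) :
    0 < (B * Vᵀ * A * V).trace := by
  -- quadratic form facts
  have hAq : ∀ η : Fin n → ℝ, (∑ i, η i) = 0 → η ≠ 0 → η ⬝ᵥ (A *ᵥ η) < 0 := by
    intro η hsum hne
    rw [quadForm_eq]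
    simpa only [hA] using hΦ n x hx η hne hsum
  have hBq : ∀ η : Fin n → ℝ, (∑ i, η i) = 0 → η ≠ 0 →
      (∑ i, ∑ j, η i * η j * B i j) < 0 := by
    intro η hsum hne
    simpa only [hB] using hΨ n y hy η hne hsum
  -- A is symmetric
  have hAsym : Aᵀ = A := by
    ext i j
    simp only [transpose_apply, hA]
    rw [← neg_sub (x i) (x j), hΦeven]
  have hAherm : A.IsHermitian := by
    unfold Matrix.IsHermitian
    ext i j
    simp [conjTranspose_apply]
    exact congrFun (congrFun hAsym i) j
  set C : Matrix (Fin n) (Fin n) ℝ := Vᵀ * (-A) * V with hCdef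
  have hCsymT : Cᵀ = C := by
    rw [hCdef]
    simp [transpose_mul, transpose_neg, transpose_transpose, hAsym, Matrix.mul_assoc]
  have hCherm : C.IsHermitian := by
    unfold Matrix.IsHermitian
    ext i j
    simpa [conjTranspose_apply] using congrFun (congrFun hCsymT i) j
  have hsumV : ∀ η : Fin n → ℝ, ∑ i, (V *ᵥ η) i = 0 := by
    intro η
    have h1 : (fun _ => (1:ℝ)) ⬝ᵥ (V *ᵥ η) = 0 := by
      rw [dotProduct_mulVec, ← mulVec_transpose, hV2, zero_dotProduct]
    simpa [dotProduct] using h1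
  have hquadC : ∀ η : Fin n → ℝ, η ⬝ᵥ (C *ᵥ η) = -((V *ᵥ η) ⬝ᵥ (A *ᵥ (V *ᵥ η))) := by
    intro η
    rw [hCdef, Matrix.mul_assoc, ← mulVec_mulVec, dotProduct_mulVec, vecMul_transpose,
      mulVec_mulVec, neg_mul, neg_mulVec, dotProduct_neg, dotProduct_mulVec]
  have hCpsd : C.PosSemidef := by
    refine PosSemidef.of_dotProduct_mulVec_nonneg hCherm fun η => ?_
    rw [show star η = η from star_trivial η, hquadC]
    by_cases hVη : V *ᵥ η = 0
    · simp [hVη]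
    · have := hAq (V *ᵥ η) (hsumV η) hVη
      linarith
  set S := (open scoped MatrixOrder in CFC.sqrt C) with hSdef
  have hSS : S * S = C := open scoped MatrixOrder in CFC.sqrt_mul_sqrt_self C hCpsd.nonneg
  have hSherm := open scoped MatrixOrder in (CFC.sqrt_nonneg C).posSemidef.1
  have hSsymT : Sᵀ = S := by
    ext i j
    simpa [conjTranspose_apply] using congrFun (congrFun hSherm i) j
  -- C annihilates ones
  have hC1 : C *ᵥ (fun _ => 1) = 0 := by
    rw [hCdef, Matrix.mul_assoc, ← mulVec_mulVec, ← mulVec_mulVec, hV1]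
    simp
  have hS1 : S *ᵥ (fun _ => 1) = 0 := by
    have h0 : (S *ᵥ fun _ => 1) ⬝ᵥ (S *ᵥ fun _ => 1) = 0 := by
      rw [dotProduct_mulVec, ← mulVec_transpose, hSsymT, mulVec_mulVec, hSS, hC1,
        zero_dotProduct]
    exact dotProduct_self_eq_zero.mp h0
  have hrowsum : ∀ i, ∑ j, S i j = 0 := by
    intro i
    have := congrFun hS1 i
    simpa [mulVec, dotProduct] using this
  -- S ≠ 0
  have hSne : S ≠ 0 := by
    intro hS0
    have hC0 : C = 0 := by rw [← hSS, hS0, Matrix.mul_zero]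
    apply hV
    ext i j
    have hVej : V *ᵥ Pi.single j 1 = 0 := by
      by_contra hne
      have h1 := hAq (V *ᵥ Pi.single j 1) (hsumV _) hne
      have h2 := hquadC (Pi.single j 1)
      rw [hC0] at h2
      simp only [Matrix.zero_mulVec, dotProduct_zero] at h2
      linarith
    have := congrFun hVej i
    simpa [mulVec, dotProduct, Pi.single_apply] using this
  -- trace rearrangement
  have hmat : C * (-B) = Vᵀ * A * V * B := by
    rw [hCdef]
    simp [Matrix.mul_neg, Matrix.neg_mul, neg_neg, Matrix.mul_assoc]
  have htr : (B * Vᵀ * A * V).trace = (S * (-B) * S).trace := by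
    have h1 : (S * (-B) * S).trace = (B * (Vᵀ * A * V)).trace := by
      rw [trace_mul_cycle S (-B) S, hSS, hmat, trace_mul_comm]
    rw [h1, ← Matrix.mul_assoc, ← Matrix.mul_assoc]
  rw [htr]
  -- expand the trace as a sum of quadratic forms in rows of S
  have hexp : (S * (-B) * S).trace
      = ∑ i, ∑ j, ∑ k, (S i j) * (S i k) * (-(B j k)) := by
    simp only [Matrix.trace, Matrix.diag, mul_apply, neg_apply, Finset.sum_mul,
      Finset.mul_sum]
    refine Finset.sum_congr rfl fun i _ => ?_
    rw [Finset.sum_comm]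
    refine Finset.sum_congr rfl fun j _ => Finset.sum_congr rfl fun k _ => ?_
    have : S k i = S i k := by
      have h := congrFun (congrFun hSsymT i) k
      simpa [transpose_apply] using h
    rw [this, Matrix.neg_apply]; ring
  rw [hexp]
  have hterm : ∀ i, 0 ≤ ∑ j, ∑ k, (S i j) * (S i k) * (-(B j k)) := by
    intro i
    by_cases h : (fun j => S i j) = 0
    · have : ∀ j, S i j = 0 := fun j => congrFun h j
      simp [this]
    · have := hBq (fun j => S i j) (hrowsum i) h
      have heq : ∑ j, ∑ k, (S i j) * (S i k) * (-(B j k))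
          = -(∑ j, ∑ k, (S i j) * (S i k) * B j k) := by
        rw [← Finset.sum_neg_distrib]
        refine Finset.sum_congr rfl fun j _ => ?_
        rw [← Finset.sum_neg_distrib]
        exact Finset.sum_congr rfl fun k _ => by ring
      rw [heq]
      linarith
  obtain ⟨i0, j0, hij⟩ : ∃ i j, S i j ≠ 0 := by
    by_contra h
    push_neg at h
    exact hSne (by ext i j; exact h i j)
  refine Finset.sum_pos' (fun i _ => hterm i) ⟨i0, Finset.mem_univ i0, ?_⟩
  have hne : (fun j => S i0 j) ≠ 0 := fun h0 => hij (congrFun h0 j0)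
  have := hBq (fun j => S i0 j) (hrowsum i0) hne
  have heq : ∑ j, ∑ k, (S i0 j) * (S i0 k) * (-(B j k))
      = -(∑ j, ∑ k, (S i0 j) * (S i0 k) * B j k) := by
    rw [← Finset.sum_neg_distrib]
    refine Finset.sum_congr rfl fun j _ => ?_
    rw [← Finset.sum_neg_distrib]
    exact Finset.sum_congr rfl fun k _ => by ring
  rw [heq]
  linarith
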